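/- Let Γ = ⟨a, t, w ∣ a² = (at)³ = (w⁻¹awa)³ = 1, tw = wt⟩ and K = ⟨a, t, v ∣ a² = (at)³ = (av)³ = v² = (tv)³ = 1⟩. Let A be the subgroup of K generated by a and t, and B the subgroup of K generated by v and t. Then there exists an isomorphism φ : A → B with φ(a) = v and φ(t) = t, and Γ is isomorphic to the HNN extension of K with associated subgroups A and B and associating isomorphism φ, via an isomorphism sending a ↦ a, t ↦ t, and w to the stable letter. -/
import Mathlib


/-- `Γ = ⟨a, t, w ∣ a² = (at)³ = (w⁻¹awa)³ = 1, tw = wt⟩`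
(generators: `0 ↦ a`, `1 ↦ t`, `2 ↦ w`). -/
abbrev GammaGrp : Type :=
  PresentedGroup
    ({FreeGroup.of (0 : Fin 3) ^ 2,
      (FreeGroup.of (0 : Fin 3) * FreeGroup.of (1 : Fin 3)) ^ 3,
      ((FreeGroup.of (2 : Fin 3))⁻¹ * FreeGroup.of (0 : Fin 3) *
        FreeGroup.of (2 : Fin 3) * FreeGroup.of (0 : Fin 3)) ^ 3,
      FreeGroup.of (1 : Fin 3) * FreeGroup.of (2 : Fin 3) *
        (FreeGroup.of (1 : Fin 3))⁻¹ * (FreeGroup.of (2 : Fin 3))⁻¹} :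
        Set (FreeGroup (Fin 3)))

/-- `K = ⟨a, t, v ∣ a² = (at)³ = (av)³ = v² = (tv)³ = 1⟩`
(generators: `0 ↦ a`, `1 ↦ t`, `2 ↦ v`). -/
abbrev KGrp : Type :=
  PresentedGroup
    ({FreeGroup.of (0 : Fin 3) ^ 2,
      (FreeGroup.of (0 : Fin 3) * FreeGroup.of (1 : Fin 3)) ^ 3,
      (FreeGroup.of (0 : Fin 3) * FreeGroup.of (2 : Fin 3)) ^ 3,
      FreeGroup.of (2 : Fin 3) ^ 2,
      (FreeGroup.of (1 : Fin 3) * FreeGroup.of (2 : Fin 3)) ^ 3} :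
        Set (FreeGroup (Fin 3)))

def aK : KGrp := PresentedGroup.of 0
def tK : KGrp := PresentedGroup.of 1
def vK : KGrp := PresentedGroup.of 2

/-- `A = ⟨a, t⟩ ≤ K`. -/
def Asub : Subgroup KGrp := Subgroup.closure {aK, tK}

/-- `B = ⟨v, t⟩ ≤ K`. -/
def Bsub : Subgroup KGrp := Subgroup.closure {vK, tK}

/-! ### Auxiliary definitions and lemmas -/

abbrev KRels : Set (FreeGroup (Fin 3)) :=
  ({FreeGroup.of (0 : Fin 3) ^ 2,
      (FreeGroup.of (0 : Fin 3) * FreeGroup.of (1 : Fin 3)) ^ 3,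
      (FreeGroup.of (0 : Fin 3) * FreeGroup.of (2 : Fin 3)) ^ 3,
      FreeGroup.of (2 : Fin 3) ^ 2,
      (FreeGroup.of (1 : Fin 3) * FreeGroup.of (2 : Fin 3)) ^ 3} :
        Set (FreeGroup (Fin 3)))

abbrev GRels : Set (FreeGroup (Fin 3)) :=
  ({FreeGroup.of (0 : Fin 3) ^ 2,
      (FreeGroup.of (0 : Fin 3) * FreeGroup.of (1 : Fin 3)) ^ 3,
      ((FreeGroup.of (2 : Fin 3))⁻¹ * FreeGroup.of (0 : Fin 3) *
        FreeGroup.of (2 : Fin 3) * FreeGroup.of (0 : Fin 3)) ^ 3,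
      FreeGroup.of (1 : Fin 3) * FreeGroup.of (2 : Fin 3) *
        (FreeGroup.of (1 : Fin 3))⁻¹ * (FreeGroup.of (2 : Fin 3))⁻¹} :
        Set (FreeGroup (Fin 3)))

def aG : GammaGrp := PresentedGroup.of 0
def tG : GammaGrp := PresentedGroup.of 1
def wG : GammaGrp := PresentedGroup.of 2

lemma mk_rel {α : Type*} {rels : Set (FreeGroup α)} {r : FreeGroup α} (h : r ∈ rels) :
    PresentedGroup.mk rels r = 1 :=
  (QuotientGroup.eq_one_iff r).2 (Subgroup.subset_normalClosure h)

lemma haK : aK ^ 2 = 1 := by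
  have := mk_rel (rels := KRels) (r := FreeGroup.of 0 ^ 2) (by simp)
  simpa [aK, PresentedGroup.of, map_pow] using this

lemma hatK : (aK * tK) ^ 3 = 1 := by
  have := mk_rel (rels := KRels) (r := (FreeGroup.of 0 * FreeGroup.of 1) ^ 3) (by simp)
  simpa [aK, tK, PresentedGroup.of, map_pow, map_mul] using this

lemma havK : (aK * vK) ^ 3 = 1 := by
  have := mk_rel (rels := KRels) (r := (FreeGroup.of 0 * FreeGroup.of 2) ^ 3) (by simp)
  simpa [aK, vK, PresentedGroup.of, map_pow, map_mul] using this

lemma hvK : vK ^ 2 = 1 := by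
  have := mk_rel (rels := KRels) (r := FreeGroup.of 2 ^ 2) (by simp)
  simpa [vK, PresentedGroup.of, map_pow] using this

lemma htvK : (tK * vK) ^ 3 = 1 := by
  have := mk_rel (rels := KRels) (r := (FreeGroup.of 1 * FreeGroup.of 2) ^ 3) (by simp)
  simpa [tK, vK, PresentedGroup.of, map_pow, map_mul] using this

lemma haG : aG ^ 2 = 1 := by
  have := mk_rel (rels := GRels) (r := FreeGroup.of 0 ^ 2) (by simp)
  simpa [aG, PresentedGroup.of, map_pow] using this

lemma hatG : (aG * tG) ^ 3 = 1 := by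
  have := mk_rel (rels := GRels) (r := (FreeGroup.of 0 * FreeGroup.of 1) ^ 3) (by simp)
  simpa [aG, tG, PresentedGroup.of, map_pow, map_mul] using this

lemma hwG : (wG⁻¹ * aG * wG * aG) ^ 3 = 1 := by
  have := mk_rel (rels := GRels)
    (r := ((FreeGroup.of (2 : Fin 3))⁻¹ * FreeGroup.of 0 * FreeGroup.of 2 * FreeGroup.of 0) ^ 3)
    (by simp)
  simpa [aG, wG, PresentedGroup.of, map_pow, map_mul, map_inv] using this

lemma hcG : tG * wG * tG⁻¹ * wG⁻¹ = 1 := by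
  have := mk_rel (rels := GRels)
    (r := FreeGroup.of (1 : Fin 3) * FreeGroup.of 2 * (FreeGroup.of (1 : Fin 3))⁻¹ *
      (FreeGroup.of (2 : Fin 3))⁻¹) (by simp)
  simpa [tG, wG, PresentedGroup.of, map_mul, map_inv] using this

lemma commG : tG * wG = wG * tG := by
  have h : tG * wG * (wG * tG)⁻¹ = 1 := by rw [← hcG]; group
  exact mul_inv_eq_one.mp h

lemma cyc3 {G : Type*} [Group G] (x y : G) : (x * y) ^ 3 = x * (y * x) ^ 3 * x⁻¹ := by
  have h : x * (y * x) * x⁻¹ = x * y := by group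
  rw [← conj_pow, h]

lemma conj_inv_pow {G : Type*} [Group G] (a b : G) (n : ℕ) :
    (a⁻¹ * b * a) ^ n = a⁻¹ * b ^ n * a := by
  have := conj_pow (i := n) (a := a⁻¹) (b := b)
  simpa using this

/-! ### The automorphism `σ` of `K` swapping `a ↔ v`, fixing `t` -/

def fσ : Fin 3 → KGrp := fun i => match i with | 0 => vK | 1 => tK | 2 => aK

lemma hσrels : ∀ r ∈ KRels, FreeGroup.lift fσ r = 1 := by
  intro r hr
  simp only [Set.mem_insert_iff, Set.mem_singleton_iff] at hr
  rcases hr with rfl | rfl | rfl | rfl | rfl <;>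
    simp only [map_pow, map_mul, FreeGroup.lift_apply_of]
  · exact (by simpa [fσ] using hvK)
  · show (vK * tK) ^ 3 = 1
    rw [cyc3, htvK]; group
  · show (vK * aK) ^ 3 = 1
    rw [cyc3, havK]; group
  · exact (by simpa [fσ] using haK)
  · show (tK * aK) ^ 3 = 1
    rw [cyc3, hatK]; group

def σ : KGrp →* KGrp := PresentedGroup.toGroup hσrels

lemma σ_aK : σ aK = vK := PresentedGroup.toGroup.of hσrels
lemma σ_tK : σ tK = tK := PresentedGroup.toGroup.of hσrels
lemma σ_vK : σ vK = aK := PresentedGroup.toGroup.of hσrels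

lemma σσ : σ.comp σ = MonoidHom.id KGrp := by
  ext i
  fin_cases i <;>
    simp [σ, PresentedGroup.toGroup.of, fσ, aK, tK, vK]

def σE : KGrp ≃* KGrp := MonoidHom.toMulEquiv σ σ σσ σσ

lemma hmap : Subgroup.map (σE : KGrp →* KGrp) Asub = Bsub := by
  have hco : ⇑(σE : KGrp →* KGrp) = ⇑σ := rfl
  rw [Asub, Bsub, MonoidHom.map_closure]
  congr 1
  rw [Set.image_insert_eq, Set.image_singleton, hco, σ_aK, σ_tK]

def φ0 : Asub ≃* Bsub := (σE.subgroupMap Asub).trans (MulEquiv.subgroupCongr hmap)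

lemma φ0_coe (x : Asub) : ((φ0 x : Bsub) : KGrp) = σ (x : KGrp) := rfl

/-! ### The homomorphism `K → Γ` and HNN lift -/

def fK : Fin 3 → GammaGrp := fun i => match i with
  | 0 => aG | 1 => tG | 2 => wG * aG * wG⁻¹

lemma hfK : ∀ r ∈ KRels, FreeGroup.lift fK r = 1 := by
  intro r hr
  simp only [Set.mem_insert_iff, Set.mem_singleton_iff] at hr
  rcases hr with rfl | rfl | rfl | rfl | rfl <;>
    simp only [map_pow, map_mul, FreeGroup.lift_apply_of]
  · exact (by simpa [fK] using haG)
  · exact (by simpa [fK] using hatG)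
  · show (aG * (wG * aG * wG⁻¹)) ^ 3 = 1
    have h1 : (aG * wG * aG) * (wG⁻¹ * aG * wG * aG) * (aG * wG * aG)⁻¹
        = aG * (wG * aG * wG⁻¹) := by group
    rw [← h1, conj_pow, hwG]; group
  · show (wG * aG * wG⁻¹) ^ 2 = 1
    rw [conj_pow, haG]; group
  · show (tG * (wG * aG * wG⁻¹)) ^ 3 = 1
    have h2 : tG * (wG * aG * wG⁻¹) = wG * (tG * aG) * wG⁻¹ := by
      rw [show tG * (wG * aG * wG⁻¹) = (tG * wG) * (aG * wG⁻¹) by group, commG]; group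
    have h3 : (tG * aG) ^ 3 = 1 := by rw [cyc3, hatG]; group
    rw [h2, conj_pow, h3]; group

def fhom : KGrp →* GammaGrp := PresentedGroup.toGroup hfK

lemma fhom_aK : fhom aK = aG := PresentedGroup.toGroup.of hfK
lemma fhom_tK : fhom tK = tG := PresentedGroup.toGroup.of hfK
lemma fhom_vK : fhom vK = wG * aG * wG⁻¹ := PresentedGroup.toGroup.of hfK

lemma hlift : ∀ x : Asub, wG * fhom ↑x = fhom ((φ0 x : Bsub) : KGrp) * wG := by
  rintro ⟨x, hx⟩
  rw [φ0_coe]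
  refine Subgroup.closure_induction
    (p := fun x _ => wG * fhom x = fhom (σ x) * wG) ?_ ?_ ?_ ?_ hx
  · rintro y (rfl | rfl)
    · rw [fhom_aK, σ_aK, fhom_vK]; group
    · rw [fhom_tK, σ_tK, fhom_tK, commG]
  · simp
  · intro y z _ _ hy hz
    rw [map_mul, map_mul, map_mul]
    calc wG * (fhom y * fhom z) = (wG * fhom y) * fhom z := by group
    _ = fhom (σ y) * (wG * fhom z) := by rw [hy]; group
    _ = fhom (σ y) * (fhom (σ z) * wG) := by rw [hz]
    _ = fhom (σ y) * fhom (σ z) * wG := by group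
  · intro y _ hy
    rw [map_inv, map_inv, map_inv]
    calc wG * (fhom y)⁻¹ = (fhom (σ y))⁻¹ * (fhom (σ y) * wG * (fhom y)⁻¹) := by group
    _ = (fhom (σ y))⁻¹ * (wG * fhom y * (fhom y)⁻¹) := by rw [hy]
    _ = (fhom (σ y))⁻¹ * wG := by group

def HNNhom : HNNExtension KGrp Asub Bsub φ0 →* GammaGrp :=
  HNNExtension.lift fhom wG hlift

/-! ### The homomorphism `Γ → HNN` -/

lemma aKmem : aK ∈ Asub := Subgroup.subset_closure (Set.mem_insert _ _)
lemma tKmem : tK ∈ Asub := Subgroup.subset_closure (Set.mem_insert_of_mem _ rfl)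

lemma φ0_a : ((φ0 ⟨aK, aKmem⟩ : Bsub) : KGrp) = vK := by rw [φ0_coe]; exact σ_aK
lemma φ0_t : ((φ0 ⟨tK, tKmem⟩ : Bsub) : KGrp) = tK := by rw [φ0_coe]; exact σ_tK

def gG : Fin 3 → HNNExtension KGrp Asub Bsub φ0 := fun i => match i with
  | 0 => HNNExtension.of aK | 1 => HNNExtension.of tK | 2 => HNNExtension.t

lemma conj_aK :
    (HNNExtension.of vK : HNNExtension KGrp Asub Bsub φ0)
      = HNNExtension.t * HNNExtension.of aK * HNNExtension.t⁻¹ := by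
  have := HNNExtension.equiv_eq_conj (φ := φ0) ⟨aK, aKmem⟩
  rwa [φ0_a] at this

lemma comm_tK :
    HNNExtension.t * (HNNExtension.of tK : HNNExtension KGrp Asub Bsub φ0)
      = HNNExtension.of tK * HNNExtension.t := by
  have := HNNExtension.t_mul_of (φ := φ0) ⟨tK, tKmem⟩
  rwa [φ0_t] at this

lemma hgG : ∀ r ∈ GRels, FreeGroup.lift gG r = 1 := by
  intro r hr
  simp only [Set.mem_insert_iff, Set.mem_singleton_iff] at hr
  rcases hr with rfl | rfl | rfl | rfl <;>
    simp only [map_pow, map_mul, map_inv, FreeGroup.lift_apply_of]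
  · show (HNNExtension.of aK) ^ 2 = 1
    rw [← map_pow, haK, map_one]
  · show (HNNExtension.of aK * HNNExtension.of tK) ^ 3 = 1
    rw [← map_mul, ← map_pow, hatK, map_one]
  · show (HNNExtension.t⁻¹ * HNNExtension.of aK * HNNExtension.t * HNNExtension.of aK) ^ 3 = 1
    have h5 : HNNExtension.t⁻¹ * HNNExtension.of aK * HNNExtension.t * HNNExtension.of aK
        = HNNExtension.t⁻¹ * (HNNExtension.of aK *
            (HNNExtension.of vK : HNNExtension KGrp Asub Bsub φ0)) * HNNExtension.t := by
      rw [conj_aK]; group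
    rw [h5, conj_inv_pow, ← map_mul, ← map_pow, havK, map_one]; group
  · show HNNExtension.of tK * HNNExtension.t * (HNNExtension.of tK)⁻¹ * HNNExtension.t⁻¹ = 1
    rw [← comm_tK]; group

def Γhom : GammaGrp →* HNNExtension KGrp Asub Bsub φ0 := PresentedGroup.toGroup hgG

lemma Γhom_aG : Γhom aG = HNNExtension.of aK := PresentedGroup.toGroup.of hgG
lemma Γhom_tG : Γhom tG = HNNExtension.of tK := PresentedGroup.toGroup.of hgG
lemma Γhom_wG : Γhom wG = HNNExtension.t := PresentedGroup.toGroup.of hgG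

lemma left_inv : HNNhom.comp Γhom = MonoidHom.id GammaGrp := by
  ext i
  fin_cases i
  · show HNNhom (Γhom aG) = aG
    rw [Γhom_aG]; simp [HNNhom, fhom_aK]
  · show HNNhom (Γhom tG) = tG
    rw [Γhom_tG]; simp [HNNhom, fhom_tK]
  · show HNNhom (Γhom wG) = wG
    rw [Γhom_wG]; simp [HNNhom]

lemma right_inv : Γhom.comp HNNhom = MonoidHom.id (HNNExtension KGrp Asub Bsub φ0) := by
  apply HNNExtension.hom_ext
  · apply PresentedGroup.ext
    intro i
    fin_cases i
    · show Γhom (HNNhom (HNNExtension.of aK)) = HNNExtension.of aK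
      simp [HNNhom, fhom_aK, Γhom_aG]
    · show Γhom (HNNhom (HNNExtension.of tK)) = HNNExtension.of tK
      simp [HNNhom, fhom_tK, Γhom_tG]
    · show Γhom (HNNhom (HNNExtension.of vK)) = HNNExtension.of vK
      rw [show HNNhom (HNNExtension.of vK) = fhom vK from HNNExtension.lift_of _ _ _ _,
        fhom_vK, conj_aK]
      simp [map_mul, Γhom_aG, Γhom_wG]
  · show Γhom (HNNhom HNNExtension.t) = HNNExtension.t
    rw [show HNNhom HNNExtension.t = wG from HNNExtension.lift_t _ _ _, Γhom_wG]

def ψ0 : GammaGrp ≃* HNNExtension KGrp Asub Bsub φ0 :=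
  MonoidHom.toMulEquiv Γhom HNNhom left_inv right_inv

/-- there is an isomorphism `φ : A → B` with `φ(a) = v`,
`φ(t) = t`, and `Γ` is isomorphic to the HNN extension of `K` with associated
subgroups `A`, `B` and associating isomorphism `φ`, via an isomorphism sending
`a ↦ a`, `t ↦ t` and `w` to the stable letter. -/
theorem gamma_iso_hnnExtension :
    ∃ φ : Asub ≃* Bsub,
      (φ ⟨aK, Subgroup.subset_closure (Set.mem_insert _ _)⟩ : KGrp) = vK ∧
      (φ ⟨tK, Subgroup.subset_closure (Set.mem_insert_of_mem _ rfl)⟩ : KGrp) = tK ∧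
      ∃ ψ : GammaGrp ≃* HNNExtension KGrp Asub Bsub φ,
        ψ (PresentedGroup.of 0) = HNNExtension.of aK ∧
        ψ (PresentedGroup.of 1) = HNNExtension.of tK ∧
        ψ (PresentedGroup.of 2) = HNNExtension.t := by
  exact ⟨φ0, φ0_a, φ0_t, ψ0, Γhom_aG, Γhom_tG, Γhom_wG⟩
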